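/- Let q be a prime power, F_q a finite field with q elements, and let k ≥ 1, n ≥ 2, h be integers with 0 ≤ h ≤ n−2 and k(h+1) > (k−1)n. Then for every monic polynomial A of degree n in F_q[t], Σ_{f ∈ I(A;h)} d_k(f) = q^{h+1} · C(n+k−1, k−1). In particular the remainder Δ_k(A;h) := N_{d_k}(A;h) − q^{h+1}·C(n+k−1,k−1) vanishes identically in this range. -/

import Mathlib

open Polynomial

/-- The `k`-th divisor function of a polynomial: the number of `k`-tuples of monic
polynomials whose product is `f`. -/
noncomputable def dpoly (F : Type) [Field F] (k : ℕ) (f : Polynomial F) : ℕ :=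
  Set.ncard {t : Fin k → Polynomial F | (∀ i, (t i).Monic) ∧ ∏ i, t i = f}

/-- The monic polynomial `X^n + ∑_{i<n} aᵢ X^i`; as `a` ranges over `Fin n → F`, this
ranges bijectively over all monic polynomials of degree `n`. -/
noncomputable def monicOf (F : Type) [Field F] (n : ℕ) (a : Fin n → F) : Polynomial F :=
  Polynomial.X ^ n + ∑ i : Fin n, Polynomial.C (a i) * Polynomial.X ^ (i : ℕ)

/-- The sum `N_{d_k}(A;h) = ∑_{f ∈ I(A;h)} d_k(f)` of the `k`-th divisor function over the
short interval `I(A;h) = {f : deg(f - A) ≤ h}`, parametrized as `f = A + ∑_{i ≤ h} gᵢ X^i`. -/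
noncomputable def Nshort (F : Type) [Field F] [Fintype F] (k h : ℕ) (A : Polynomial F) : ℕ :=
  ∑ g : Fin (h + 1) → F,
    dpoly F k (A + ∑ i : Fin (h + 1), Polynomial.C (g i) * Polynomial.X ^ (i : ℕ))

variable {F : Type} [Field F]

lemma sumC_coeff {N : ℕ} (c : Fin N → F) (j : ℕ) :
    (∑ i : Fin N, C (c i) * X ^ (i : ℕ)).coeff j = if hj : j < N then c ⟨j, hj⟩ else 0 := by
  classical
  rw [Polynomial.finset_sum_coeff]
  simp_rw [Polynomial.coeff_C_mul, Polynomial.coeff_X_pow]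
  split
  · next hj =>
    rw [Finset.sum_eq_single (⟨j, hj⟩ : Fin N)]
    · simp
    · intro b _ hb
      have : j ≠ (b : ℕ) := fun h => hb (by ext; simp [← h]) |>.elim
      simp [this]
    · simp
  · next hj =>
    apply Finset.sum_eq_zero
    intro b _
    have hb := b.isLt
    have : j ≠ (b : ℕ) := by omega
    simp [this]

lemma monicOf_coeff {d : ℕ} (a : Fin d → F) (j : ℕ) :
    (monicOf F d a).coeff j =
      (if j = d then 1 else 0) + (if hj : j < d then a ⟨j, hj⟩ else 0) := by
  rw [monicOf, Polynomial.coeff_add, Polynomial.coeff_X_pow, sumC_coeff]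

lemma monicOf_coeff_lt {d : ℕ} (a : Fin d → F) {j : ℕ} (hj : j < d) :
    (monicOf F d a).coeff j = a ⟨j, hj⟩ := by
  rw [monicOf_coeff]; rw [if_neg (by omega), dif_pos hj, zero_add]

lemma monicOf_coeff_self {d : ℕ} (a : Fin d → F) :
    (monicOf F d a).coeff d = 1 := by
  rw [monicOf_coeff]; rw [if_pos rfl, dif_neg (by omega), add_zero]

lemma monicOf_coeff_gt {d : ℕ} (a : Fin d → F) {j : ℕ} (hj : d < j) :
    (monicOf F d a).coeff j = 0 := by
  rw [monicOf_coeff]; rw [if_neg (by omega), dif_neg (by omega), add_zero]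

lemma monicOf_natDegree_le {d : ℕ} (a : Fin d → F) : (monicOf F d a).natDegree ≤ d :=
  Polynomial.natDegree_le_iff_coeff_eq_zero.2 fun _ h => monicOf_coeff_gt a h

lemma monicOf_monic {d : ℕ} (a : Fin d → F) : (monicOf F d a).Monic :=
  Polynomial.monic_of_natDegree_le_of_coeff_eq_one d (monicOf_natDegree_le a)
    (monicOf_coeff_self a)

lemma monicOf_natDegree {d : ℕ} (a : Fin d → F) : (monicOf F d a).natDegree = d :=
  le_antisymm (monicOf_natDegree_le a)
    (Polynomial.le_natDegree_of_ne_zero (by rw [monicOf_coeff_self]; exact one_ne_zero))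

lemma monicOf_injective {d : ℕ} {a b : Fin d → F} (h : monicOf F d a = monicOf F d b) :
    a = b := by
  funext i
  have := congrArg (fun p => Polynomial.coeff p (i : ℕ)) h
  simpa [monicOf_coeff_lt _ i.isLt] using this

lemma monicOf_surj {d : ℕ} {f : Polynomial F} (hf : f.Monic) (hdeg : f.natDegree = d) :
    monicOf F d (fun i => f.coeff (i : ℕ)) = f := by
  ext j
  rcases lt_trichotomy j d with hj | hj | hj
  · rw [monicOf_coeff_lt _ hj]
  · subst hj
    rw [monicOf_coeff_self]
    exact (hdeg ▸ hf.coeff_natDegree).symm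
  · rw [monicOf_coeff_gt _ hj, Polynomial.coeff_eq_zero_of_natDegree_lt (by omega)]

lemma coeff_mul_top {p g : Polynomial F} {i0 e : ℕ} (hg : g.Monic) (hge : g.natDegree = e)
    (hp : ∀ j, i0 < j → p.coeff j = 0) : (p * g).coeff (i0 + e) = p.coeff i0 := by
  rw [Polynomial.coeff_mul]
  rw [Finset.sum_eq_single ((i0, e) : ℕ × ℕ)]
  · rw [← hge, hg.coeff_natDegree, mul_one]
  · rintro ⟨x, y⟩ hmem hne
    rw [Finset.HasAntidiagonal.mem_antidiagonal] at hmem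
    by_cases hx : i0 < x
    · rw [hp x hx, zero_mul]
    · have hy : e < y := by
        rcases Nat.lt_or_ge x i0 with h | h
        · omega
        · exfalso; apply hne; have : x = i0 := le_antisymm (not_lt.1 hx) h
          subst this; simp at hmem ⊢; omega
      have hgy : g.coeff y = 0 := Polynomial.coeff_eq_zero_of_natDegree_lt (by omega)
      simp only [hgy, mul_zero]
  · intro h
    simp at h

lemma fiber_count (F : Type) [Field F] [Fintype F] (k n h : ℕ) (hh : h + 2 ≤ n)
    (hkm : k * (n - 1 - h) < n) (A : Polynomial F) (hA : A.Monic) (hAdeg : A.natDegree = n)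
    (d : Fin k → ℕ) (hd : ∑ i, d i = n) :
    Nat.card {a : ∀ i : Fin k, Fin (d i) → F //
        ∀ j, h + 1 ≤ j → (∏ i, monicOf F (d i) (a i)).coeff j = A.coeff j} =
      Fintype.card F ^ (h + 1) := by
  classical
  set m := n - 1 - h with hm
  have hprodMonic : ∀ a : ∀ i : Fin k, Fin (d i) → F, (∏ i, monicOf F (d i) (a i)).Monic :=
    fun a => monic_prod_of_monic _ _ fun i _ => monicOf_monic _
  have hprodDeg : ∀ a : ∀ i : Fin k, Fin (d i) → F,
      (∏ i, monicOf F (d i) (a i)).natDegree = n := by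
    intro a
    rw [Polynomial.natDegree_prod _ _ (fun i _ => (monicOf_monic (a i)).ne_zero)]
    simp_rw [monicOf_natDegree]; exact hd
  have hcond : ∀ a : ∀ i : Fin k, Fin (d i) → F,
      (∀ j, h + 1 ≤ j → (∏ i, monicOf F (d i) (a i)).coeff j = A.coeff j) ↔
      (∀ r : Fin m, (∏ i, monicOf F (d i) (a i)).coeff (h + 1 + (r : ℕ)) =
        A.coeff (h + 1 + (r : ℕ))) := by
    intro a
    constructor
    · intro H r; exact H _ (by omega)
    · intro H j hj
      rcases lt_trichotomy j n with hjn | hjn | hjn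
      · have hr : j - (h + 1) < m := by omega
        have := H ⟨j - (h + 1), hr⟩
        simpa [show h + 1 + (j - (h + 1)) = j by omega] using this
      · subst hjn
        conv_lhs => rw [← hprodDeg a, (hprodMonic a).coeff_natDegree]
        rw [← hAdeg, hA.coeff_natDegree]
      · rw [Polynomial.coeff_eq_zero_of_natDegree_lt (by rw [hprodDeg a]; omega),
          Polynomial.coeff_eq_zero_of_natDegree_lt (by omega)]
  obtain ⟨i₀, hi₀⟩ : ∃ i, m < d i := by
    by_contra hcon
    push_neg at hcon
    have hle : (∑ i, d i) ≤ ∑ _i : Fin k, m := Finset.sum_le_sum fun i _ => hcon i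
    simp only [Finset.sum_const, Finset.card_univ, Fintype.card_fin, smul_eq_mul] at hle
    omega
  have hdile : d i₀ ≤ n := hd ▸
    Finset.single_le_sum (f := d) (fun i _ => Nat.zero_le _) (Finset.mem_univ i₀)
  -- the comparison map
  set Ψ : (∀ i : Fin k, Fin (d i) → F) → (Fin m → F) × ((Fin (d i₀ - m) → F) × (∀ i : {j : Fin k // j ≠ i₀}, Fin (d i.1) → F)) := fun a =>
    (fun r => (∏ i, monicOf F (d i) (a i)).coeff (h + 1 + (r : ℕ)),
     fun j => a i₀ (Fin.castLE (Nat.sub_le _ _) j),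
     fun i => a i.1) with hΨ
  have hinj : Function.Injective Ψ := by
    intro a a' hEq
    have h1 : ∀ r : Fin m, (∏ i, monicOf F (d i) (a i)).coeff (h + 1 + (r : ℕ)) =
        (∏ i, monicOf F (d i) (a' i)).coeff (h + 1 + (r : ℕ)) :=
      fun r => congrFun (congrArg Prod.fst hEq) r
    have h2 : ∀ j : Fin (d i₀ - m), a i₀ (Fin.castLE (Nat.sub_le _ _) j) =
        a' i₀ (Fin.castLE (Nat.sub_le _ _) j) :=
      fun j => congrFun (congrArg (fun p => p.2.1) hEq) j
    have h3 : ∀ i : Fin k, i ≠ i₀ → a i = a' i :=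
      fun i hi => congrFun (congrArg (fun p => p.2.2) hEq) ⟨i, hi⟩
    funext i
    by_cases hii : i = i₀
    swap
    · exact h3 i hii
    subst hii
    by_contra hne
    obtain ⟨x0, hx0⟩ := Function.ne_iff.1 hne
    set S := Finset.univ.filter (fun x : Fin (d i) => a i x ≠ a' i x) with hSdef
    have hS : S.Nonempty := ⟨x0, by simp [hSdef, hx0]⟩
    set i1 := S.max' hS with hi1
    have hmax : ∀ x : Fin (d i), i1 < x → a i x = a' i x := by
      intro x hx
      by_contra hxx
      have hxS : x ∈ S := by simp [hSdef, hxx]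
      exact absurd (S.le_max' x hxS) (not_le.2 hx)
    have hne1 : a i i1 ≠ a' i i1 := by
      have := S.max'_mem hS
      simpa [hSdef] using this
    have hlow : d i - m ≤ (i1 : ℕ) := by
      by_contra hl
      push_neg at hl
      have := h2 ⟨(i1 : ℕ), hl⟩
      apply hne1
      simpa [Fin.castLE] using this
    have hi1lt := i1.isLt
    set G := ∏ x ∈ Finset.univ.erase i, monicOf F (d x) (a x) with hG
    have hGeq : ∏ x ∈ Finset.univ.erase i, monicOf F (d x) (a' x) = G :=
      Finset.prod_congr rfl fun x hx => by rw [h3 x (Finset.ne_of_mem_erase hx)]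
    have hGmonic : G.Monic := monic_prod_of_monic _ _ fun x _ => monicOf_monic _
    have hGdeg : G.natDegree = n - d i := by
      rw [hG, Polynomial.natDegree_prod _ _ (fun x _ => (monicOf_monic _).ne_zero)]
      simp_rw [monicOf_natDegree]
      have hsum := Finset.add_sum_erase Finset.univ d (Finset.mem_univ i)
      omega
    set j0 := (i1 : ℕ) + (n - d i) with hj0
    have hr : j0 - (h + 1) < m := by omega
    have hcoeff := h1 ⟨j0 - (h + 1), hr⟩
    have hidx : h + 1 + (j0 - (h + 1)) = j0 := by omega
    rw [hidx] at hcoeff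
    rw [← Finset.mul_prod_erase Finset.univ _ (Finset.mem_univ i), ← hG] at hcoeff
    conv_rhs at hcoeff =>
      rw [← Finset.mul_prod_erase Finset.univ _ (Finset.mem_univ i), hGeq]
    set p := monicOf F (d i) (a i) - monicOf F (d i) (a' i) with hp
    have hpc : ∀ j, (i1 : ℕ) < j → p.coeff j = 0 := by
      intro j hj
      rw [hp, Polynomial.coeff_sub]
      rcases lt_trichotomy j (d i) with hjd | hjd | hjd
      · rw [monicOf_coeff_lt _ hjd, monicOf_coeff_lt _ hjd,
          hmax ⟨j, hjd⟩ (by simpa [Fin.lt_def] using hj), sub_self]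
      · subst hjd
        rw [monicOf_coeff_self, monicOf_coeff_self, sub_self]
      · rw [monicOf_coeff_gt _ hjd, monicOf_coeff_gt _ hjd, sub_self]
    have hkey : (p * G).coeff j0 = p.coeff (i1 : ℕ) := by
      rw [hj0]
      exact coeff_mul_top hGmonic hGdeg hpc
    have hzero : (p * G).coeff j0 = 0 := by
      rw [hp, sub_mul, Polynomial.coeff_sub, hcoeff, sub_self]
    rw [hkey] at hzero
    rw [hp, Polynomial.coeff_sub, monicOf_coeff_lt _ hi1lt, monicOf_coeff_lt _ hi1lt]
      at hzero
    simp only [Fin.eta] at hzero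
    exact hne1 (sub_eq_zero.1 hzero)
  have hcard_dom : Fintype.card (∀ i : Fin k, Fin (d i) → F) = Fintype.card F ^ n := by
    rw [Fintype.card_pi]
    simp only [Fintype.card_fun, Fintype.card_fin]
    rw [Finset.prod_pow_eq_pow_sum, hd]
  have herase : ∑ x ∈ Finset.univ.erase i₀, d x = n - d i₀ := by
    have hsum := Finset.add_sum_erase Finset.univ d (Finset.mem_univ i₀)
    omega
  have hcard_sub : Fintype.card (∀ i : {j : Fin k // j ≠ i₀}, Fin (d i.1) → F) =
      Fintype.card F ^ (n - d i₀) := by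
    rw [Fintype.card_pi]
    simp only [Fintype.card_fun, Fintype.card_fin]
    rw [← Finset.prod_subtype (Finset.univ.erase i₀)
      (fun x => by simp [Finset.mem_erase]) (fun x => Fintype.card F ^ d x),
      Finset.prod_pow_eq_pow_sum, herase]
  have hcard_cod : Fintype.card ((Fin m → F) × ((Fin (d i₀ - m) → F) × (∀ i : {j : Fin k // j ≠ i₀}, Fin (d i.1) → F))) = Fintype.card F ^ n := by
    rw [Fintype.card_prod, Fintype.card_prod, hcard_sub]
    simp only [Fintype.card_fun, Fintype.card_fin]
    rw [← pow_add, ← pow_add]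
    congr 1
    omega
  have hbij : Function.Bijective Ψ :=
    (Fintype.bijective_iff_injective_and_card Ψ).2 ⟨hinj, by rw [hcard_dom, hcard_cod]⟩
  set E := Equiv.ofBijective Ψ hbij with hE
  set c : Fin m → F := fun r => A.coeff (h + 1 + (r : ℕ)) with hc
  have e1 : {a : ∀ i : Fin k, Fin (d i) → F //
        ∀ j, h + 1 ≤ j → (∏ i, monicOf F (d i) (a i)).coeff j = A.coeff j} ≃
      {x : (Fin m → F) × ((Fin (d i₀ - m) → F) × (∀ i : {j : Fin k // j ≠ i₀}, Fin (d i.1) → F)) // x.1 = c} := by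
    refine (Equiv.subtypeEquivRight (q := fun a => (Ψ a).1 = c) fun a => ?_).trans
      (E.subtypeEquiv fun a => Iff.rfl)
    exact (hcond a).trans funext_iff.symm
  have e2 : {x : (Fin m → F) × ((Fin (d i₀ - m) → F) × (∀ i : {j : Fin k // j ≠ i₀}, Fin (d i.1) → F)) // x.1 = c} ≃ ((Fin (d i₀ - m) → F) × (∀ i : {j : Fin k // j ≠ i₀}, Fin (d i.1) → F)) :=
    { toFun := fun x => x.1.2
      invFun := fun b => ⟨(c, b), rfl⟩
      left_inv := fun x => Subtype.ext
        (by obtain ⟨⟨x1, x2⟩, hx⟩ := x; dsimp at hx ⊢; rw [hx])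
      right_inv := fun b => rfl }
  rw [Nat.card_congr (e1.trans e2), Nat.card_eq_fintype_card, Fintype.card_prod,
    hcard_sub]
  simp only [Fintype.card_fun, Fintype.card_fin]
  rw [← pow_add]
  congr 1
  omega

lemma nat_card_sigma {ι : Type*} [Fintype ι] (f : ι → Type*) [∀ i, Finite (f i)] :
    Nat.card (Σ i, f i) = ∑ i, Nat.card (f i) := by
  letI : ∀ i, Fintype (f i) := fun i => Fintype.ofFinite _
  simp only [Nat.card_eq_fintype_card, Fintype.card_sigma]

noncomputable def main_equiv (F : Type) [Field F] [Fintype F] (k n h : ℕ) (hh : h + 2 ≤ n)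
    (A : Polynomial F) (hA : A.Monic) (hAdeg : A.natDegree = n) :
    (Σ d : {d : Fin k → ℕ // ∑ i, d i = n}, {a : ∀ i : Fin k, Fin (d.1 i) → F //
        ∀ j, h + 1 ≤ j → (∏ i, monicOf F (d.1 i) (a i)).coeff j = A.coeff j}) ≃
    (Σ g : Fin (h + 1) → F, {t : Fin k → Polynomial F //
        (∀ i, (t i).Monic) ∧ ∏ i, t i = A + ∑ i : Fin (h + 1), C (g i) * X ^ (i : ℕ)}) := by
  classical
  have hAne : A ≠ 0 := hA.ne_zero
  refine Equiv.ofBijective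
    (fun x => ⟨fun i : Fin (h + 1) => ((∏ j, monicOf F (x.1.1 j) (x.2.1 j)) - A).coeff (i : ℕ),
      ⟨fun j => monicOf F (x.1.1 j) (x.2.1 j), fun j => monicOf_monic _, ?_⟩⟩) ⟨?_, ?_⟩
  · -- the product identity
    obtain ⟨⟨d, hd⟩, a, ha⟩ := x
    dsimp only
    ext jj
    rw [Polynomial.coeff_add, sumC_coeff]
    split
    · next hjj =>
      rw [Polynomial.coeff_sub]
      ring
    · next hjj =>
      rw [ha jj (by omega), add_zero]
  · -- injectivity
    rintro ⟨⟨dx, hdx⟩, ax, hax⟩ ⟨⟨dy, hdy⟩, ay, hay⟩ hxy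
    have ht : (fun j => monicOf F (dx j) (ax j)) = (fun j => monicOf F (dy j) (ay j)) :=
      congrArg (fun z => (z.2.1 : Fin k → Polynomial F)) hxy
    have hdd : dx = dy := by
      funext j
      have := congrArg Polynomial.natDegree (congrFun ht j)
      rwa [monicOf_natDegree, monicOf_natDegree] at this
    subst hdd
    have haa : ax = ay := funext fun j => monicOf_injective (congrFun ht j)
    subst haa
    rfl
  · -- surjectivity
    rintro ⟨g, t, hmon, hprod⟩
    have hpgc : ∀ j, h + 1 ≤ j → (∑ i : Fin (h + 1), C (g i) * X ^ (i : ℕ)).coeff j = 0 := by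
      intro j hj
      rw [sumC_coeff, dif_neg (by omega)]
    have hpgdeglt : (∑ i : Fin (h + 1), C (g i) * X ^ (i : ℕ)).degree < A.degree := by
      have h1 : (∑ i : Fin (h + 1), C (g i) * X ^ (i : ℕ)).natDegree ≤ h :=
        Polynomial.natDegree_le_iff_coeff_eq_zero.2 fun N hN => hpgc N (by omega)
      have h2 : A.degree = (n : WithBot ℕ) := hAdeg ▸ Polynomial.degree_eq_natDegree hAne
      calc (∑ i : Fin (h + 1), C (g i) * X ^ (i : ℕ)).degree
          ≤ ((∑ i : Fin (h + 1), C (g i) * X ^ (i : ℕ)).natDegree : WithBot ℕ) :=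
            Polynomial.degree_le_natDegree
        _ ≤ (h : WithBot ℕ) := by exact_mod_cast h1
        _ < A.degree := by rw [h2]; exact_mod_cast (by omega : h < n)
    have hdegApg : (A + ∑ i : Fin (h + 1), C (g i) * X ^ (i : ℕ)).natDegree = n :=
      (Polynomial.natDegree_eq_of_degree_eq
        (Polynomial.degree_add_eq_left_of_degree_lt hpgdeglt)).trans hAdeg
    set d : Fin k → ℕ := fun j => (t j).natDegree with hddef
    have hd : ∑ i, d i = n := by
      have := Polynomial.natDegree_prod Finset.univ t (fun j _ => (hmon j).ne_zero)
      rw [hprod, hdegApg] at this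
      exact this.symm
    have hsurj : ∀ j, monicOf F (d j) (fun x => (t j).coeff (x : ℕ)) = t j :=
      fun j => monicOf_surj (hmon j) rfl
    have hprodeq : (∏ j, monicOf F (d j) (fun x => (t j).coeff (x : ℕ))) = ∏ j, t j :=
      Finset.prod_congr rfl fun j _ => hsurj j
    have hcoeff : ∀ j, h + 1 ≤ j →
        (∏ i, monicOf F (d i) (fun x => (t i).coeff (x : ℕ))).coeff j = A.coeff j := by
      intro j hj
      rw [hprodeq, hprod, Polynomial.coeff_add, hpgc j hj, add_zero]
    refine ⟨⟨⟨d, hd⟩, ⟨fun j => fun x => (t j).coeff (x : ℕ), hcoeff⟩⟩, ?_⟩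
    have hgeq : (fun i : Fin (h + 1) =>
        ((∏ j, monicOf F (d j) (fun x => (t j).coeff (x : ℕ))) - A).coeff (i : ℕ)) = g := by
      funext i
      rw [hprodeq, hprod, add_sub_cancel_left, sumC_coeff, dif_pos i.isLt]
    refine Sigma.ext hgeq ?_
    refine (Subtype.heq_iff_coe_eq ?_).2 (funext fun j => hsurj j)
    intro z
    have hg' : ∀ i : Fin (h + 1),
        ((∏ j, monicOf F (d j) (fun x => (t j).coeff (x : ℕ))) - A).coeff (i : ℕ) = g i :=
      fun i => congrFun hgeq i
    dsimp only
    simp only [hg']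

theorem short_interval_sum_large_h (F : Type) [Field F] [Fintype F]
    (k n h : ℕ) (hk : 1 ≤ k) (hn : 2 ≤ n) (hh : h + 2 ≤ n)
    (hrange : (k - 1) * n < k * (h + 1))
    (A : Polynomial F) (hA : A.Monic) (hAdeg : A.natDegree = n) :
    Nshort F k h A = Fintype.card F ^ (h + 1) * Nat.choose (n + k - 1) (k - 1) := by
  classical
  have hkm : k * (n - 1 - h) < n := by
    have h1 : k * (n - 1 - h) + k * (h + 1) = k * n := by
      rw [← Nat.mul_add]; congr 1; omega
    have h2 : (k - 1) * n + n = k * n := by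
      have hkk : k - 1 + 1 = k := by omega
      calc (k - 1) * n + n = (k - 1 + 1) * n := by ring
        _ = k * n := by rw [hkk]
    generalize hA1 : k * (n - 1 - h) = a at h1 ⊢
    generalize hA2 : k * (h + 1) = b at h1 hrange
    generalize hA3 : k * n = cc at h1 h2
    generalize hA4 : (k - 1) * n = ee at h2 hrange
    omega
  haveI hDfin : Finite {d : Fin k → ℕ // ∑ i, d i = n} := by
    have hle : ∀ (d : {d : Fin k → ℕ // ∑ i, d i = n}) (i : Fin k), d.1 i ≤ n := by
      intro d i
      have h1 := Finset.single_le_sum (f := d.1) (fun _ _ => Nat.zero_le _) (Finset.mem_univ i)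
      rw [d.2] at h1
      exact h1
    apply Finite.of_injective (fun d : {d : Fin k → ℕ // ∑ i, d i = n} =>
      (fun i => (⟨d.1 i, Nat.lt_succ_of_le (hle d i)⟩ : Fin (n + 1))))
    intro d d' hdd
    apply Subtype.ext; funext i
    exact congrArg Fin.val (congrFun hdd i)
  letI : Fintype {d : Fin k → ℕ // ∑ i, d i = n} := Fintype.ofFinite _
  set EV := main_equiv F k n h hh A hA hAdeg with hEV
  haveI hfin1 : Finite (Σ g : Fin (h + 1) → F, {t : Fin k → Polynomial F //
      (∀ i, (t i).Monic) ∧ ∏ i, t i =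
        A + ∑ i : Fin (h + 1), Polynomial.C (g i) * Polynomial.X ^ (i : ℕ)}) :=
    Finite.of_equiv _ EV
  haveI hfin2 : ∀ g : Fin (h + 1) → F, Finite {t : Fin k → Polynomial F //
      (∀ i, (t i).Monic) ∧ ∏ i, t i =
        A + ∑ i : Fin (h + 1), Polynomial.C (g i) * Polynomial.X ^ (i : ℕ)} :=
    fun g => Finite.of_injective
      (Sigma.mk (β := fun g' : Fin (h + 1) → F =>
        {t : Fin k → Polynomial F // (∀ i, (t i).Monic) ∧ ∏ i, t i =
          A + ∑ i : Fin (h + 1), Polynomial.C (g' i) * Polynomial.X ^ (i : ℕ)}) g)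
      sigma_mk_injective
  have hDcard : Fintype.card {d : Fin k → ℕ // ∑ i, d i = n} =
      Nat.choose (n + k - 1) (k - 1) := by
    rw [← Nat.card_eq_fintype_card, Nat.card_congr (Sym.equivNatSumOfFintype (Fin k) n).symm,
      Nat.card_eq_fintype_card, Sym.card_sym_eq_choose, Fintype.card_fin]
    rw [show k + n - 1 = n + k - 1 from by omega]
    exact Nat.choose_symm_of_eq_add (by omega)
  calc Nshort F k h A
      = ∑ g : Fin (h + 1) → F, Nat.card {t : Fin k → Polynomial F //
          (∀ i, (t i).Monic) ∧ ∏ i, t i =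
            A + ∑ i : Fin (h + 1), Polynomial.C (g i) * Polynomial.X ^ (i : ℕ)} := by
        unfold Nshort dpoly
        refine Finset.sum_congr rfl fun g _ => ?_
        rw [← Nat.card_coe_set_eq]
        rfl
    _ = Nat.card (Σ g : Fin (h + 1) → F, {t : Fin k → Polynomial F //
          (∀ i, (t i).Monic) ∧ ∏ i, t i =
            A + ∑ i : Fin (h + 1), Polynomial.C (g i) * Polynomial.X ^ (i : ℕ)}) :=
        (nat_card_sigma _).symm
    _ = Nat.card (Σ d : {d : Fin k → ℕ // ∑ i, d i = n}, {a : ∀ i : Fin k, Fin (d.1 i) → F //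
          ∀ j, h + 1 ≤ j → (∏ i, monicOf F (d.1 i) (a i)).coeff j = A.coeff j}) :=
        (Nat.card_congr EV).symm
    _ = ∑ dd : {d : Fin k → ℕ // ∑ i, d i = n}, Nat.card {a : ∀ i : Fin k, Fin (dd.1 i) → F //
          ∀ j, h + 1 ≤ j → (∏ i, monicOf F (dd.1 i) (a i)).coeff j = A.coeff j} :=
        nat_card_sigma _
    _ = ∑ _dd : {d : Fin k → ℕ // ∑ i, d i = n}, Fintype.card F ^ (h + 1) :=
        Finset.sum_congr rfl fun dd _ => fiber_count F k n h hh hkm A hA hAdeg dd.1 dd.2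
    _ = Fintype.card {d : Fin k → ℕ // ∑ i, d i = n} * Fintype.card F ^ (h + 1) := by
        rw [Finset.sum_const, Finset.card_univ, smul_eq_mul]
    _ = Fintype.card F ^ (h + 1) * Nat.choose (n + k - 1) (k - 1) := by
        rw [hDcard, Nat.mul_comm]
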